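/- Let N = {1,…,2n} carry a coloring with exactly n black and n white nodes, let b_1 < ⋯ < b_n be the black nodes and w_1 < ⋯ < w_n the white nodes, and for a black node b and white node w set τ(b,w) = (−1)^{[b > w]} · sign(b,w) ∈ {1, −1}, where [b > w] equals 1 if b > w and 0 otherwise. Then there exist functions ε, δ : {1,…,n} → {1, −1} such that τ(b_i, w_j) = ε(i) · δ(j) · (−1)^{i+j} for all 1 ≤ i, j ≤ n, and moreover ∏_{i=1}^n ε(i) · ∏_{j=1}^n δ(j) equals sign_cons(N) · (−1)^{Σ_{i=1}^{2k} ⌊n_i/2⌋} if node 1 is black, and equals (−1)^n · sign_cons(N) · (−1)^{Σ_{i=1}^{2k} ⌊n_i/2⌋} if node 1 is white, where n_1 < ⋯ < n_{2k} are the couples of consecutive nodes of the same color. -/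

import Mathlib

namespace DD

/-- The node set `{1, …, 2n}`. -/
def nodes (n : ℕ) : Finset ℕ := Finset.Icc 1 (2 * n)

/-- `ρ` is a pairing of `{1,…,2n}`: a fixed-point-free involution of the node set. -/
structure IsPairing (n : ℕ) (ρ : ℕ → ℕ) : Prop where
  maps : ∀ i ∈ nodes n, ρ i ∈ nodes n
  invol : ∀ i ∈ nodes n, ρ (ρ i) = i
  nofix : ∀ i ∈ nodes n, ρ i ≠ i

/-- Number of crossings of `ρ` among pairs of `ρ` contained in `A`:
a crossing is a pair of pairs `(a,c)`, `(b,d)` of `ρ` with `a < b < c < d`. -/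
def numCrossingsOn (A : Finset ℕ) (ρ : ℕ → ℕ) : ℕ :=
  ((A ×ˢ A).filter (fun p => p.1 < p.2 ∧ p.2 < ρ p.1 ∧ ρ p.1 < ρ p.2)).card

/-- Number of crossings of a pairing of `{1,…,2n}`. -/
def numCrossings (n : ℕ) (ρ : ℕ → ℕ) : ℕ := numCrossingsOn (nodes n) ρ

/-- A pairing is planar if it has no crossings. -/
def IsPlanar (n : ℕ) (ρ : ℕ → ℕ) : Prop := numCrossings n ρ = 0

/-- A coloring `c : ℕ → Bool` of the nodes: `true` = black, `false` = white.
A black-white pairing pairs each black node with a white node. -/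
def IsBW (n : ℕ) (c : ℕ → Bool) (ρ : ℕ → ℕ) : Prop :=
  ∀ i ∈ nodes n, c (ρ i) = !(c i)

/-- An odd-even pairing pairs each odd node with an even node. -/
def IsOE (n : ℕ) (ρ : ℕ → ℕ) : Prop :=
  ∀ i ∈ nodes n, ρ i % 2 ≠ i % 2

/-- The coloring has exactly `n` black (hence exactly `n` white) nodes. -/
def BalancedColoring (n : ℕ) (c : ℕ → Bool) : Prop :=
  ((nodes n).filter (fun i => c i = true)).card = n

/-- The black nodes. -/
def blacks (n : ℕ) (c : ℕ → Bool) : Finset ℕ := (nodes n).filter (fun i => c i = true)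

/-- The white nodes. -/
def whites (n : ℕ) (c : ℕ → Bool) : Finset ℕ := (nodes n).filter (fun i => c i = false)

/-- `sign_BW(ρ)`: the sign of the permutation sending `i` to the rank of `w_i = ρ(b_i)`
among the white nodes, computed as `(-1)` to the number of inversions, i.e. the number of
pairs of black nodes `b < b'` with `ρ b > ρ b'`. -/
def signBW (n : ℕ) (c : ℕ → Bool) (ρ : ℕ → ℕ) : ℤ :=
  (-1 : ℤ) ^ (((nodes n ×ˢ nodes n).filter
    (fun p => c p.1 = true ∧ c p.2 = true ∧ p.1 < p.2 ∧ ρ p.2 < ρ p.1)).card)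

/-- `sign_OE(π)`: the sign of the permutation sending `i` to `π(2i−1)/2`, computed as
`(-1)` to the number of pairs of odd nodes `a < b` with `π a > π b`. -/
def signOE (n : ℕ) (π : ℕ → ℕ) : ℤ :=
  (-1 : ℤ) ^ (((nodes n ×ˢ nodes n).filter
    (fun p => p.1 % 2 = 1 ∧ p.2 % 2 = 1 ∧ p.1 < p.2 ∧ π p.2 < π p.1)).card)

/-- `a_{b,w}`: the number of indices `i` with `min b w ≤ i < max b w` such that nodes `i`
and `i+1` have the same color. -/
def aCount (c : ℕ → Bool) (b w : ℕ) : ℕ :=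
  ((Finset.Ico (min b w) (max b w)).filter (fun i => c i = c (i + 1))).card

/-- `sign(b,w) = (−1)^{(|b−w| + a_{b,w} − 1)/2}` for a black node `b` and white node `w`. -/
def pairSign (c : ℕ → Bool) (b w : ℕ) : ℤ :=
  (-1 : ℤ) ^ ((max b w - min b w + aCount c b w - 1) / 2)

/-- Cyclic successor of node `m` in `{1,…,2n}`. -/
def nextNode (n m : ℕ) : ℕ := if m = 2 * n then 1 else m + 1

/-- Couples of consecutive nodes of the same color, cyclically: indices `m ∈ {1,…,2n}`
with nodes `m` and `m+1` (cyclically) of the same color. -/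
def couples (n : ℕ) (c : ℕ → Bool) : Finset ℕ :=
  (nodes n).filter (fun m => c m = c (nextNode n m))

/-- The value `φ(m)` for a couple `m`: writing `r` for the rank of `m` among couples of its
own color, `φ(m) = 2r` if `m` has the same color as node `1`, and `φ(m) = 2r − 1` otherwise. -/
def phiCouple (n : ℕ) (c : ℕ → Bool) (m : ℕ) : ℕ :=
  if c m = c 1 then 2 * ((couples n c).filter (fun m' => c m' = c m ∧ m' ≤ m)).card
  else 2 * ((couples n c).filter (fun m' => c m' = c m ∧ m' ≤ m)).card - 1

/-- `sign_cons(N)`: the sign of the one-line permutation `(φ(n₁),…,φ(n_{2k}))`, computed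
as `(-1)` to its number of inversions. -/
def signCons (n : ℕ) (c : ℕ → Bool) : ℤ :=
  (-1 : ℤ) ^ (((couples n c ×ˢ couples n c).filter
    (fun p => p.1 < p.2 ∧ phiCouple n c p.2 < phiCouple n c p.1)).card)

/-- The set `T` of nodes that are odd and white, or even and black. -/
def Tset (n : ℕ) (c : ℕ → Bool) : Finset ℕ :=
  (nodes n).filter (fun i => (i % 2 = 1 ∧ c i = false) ∨ (i % 2 = 0 ∧ c i = true))

/-- A subset is balanced if it contains equally many black and white nodes. -/
def BalancedSubset (c : ℕ → Bool) (S : Finset ℕ) : Prop :=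
  (S.filter (fun i => c i = true)).card = (S.filter (fun i => c i = false)).card

/-- `ρ` does not connect `S` to its complement: `ρ(S) = S`. -/
def Invariant (S : Finset ℕ) (ρ : ℕ → ℕ) : Prop := ∀ i ∈ S, ρ i ∈ S

/-- Reachability under the subgroup generated by the involutions `π` and `ρ`. -/
def compRel (n : ℕ) (π ρ : ℕ → ℕ) (a b : ℕ) : Prop :=
  Relation.ReflTransGen (fun u v => u ∈ nodes n ∧ (v = π u ∨ v = ρ u)) a b

open scoped Classical in
/-- The number of components (orbits) of `π ∪ ρ` on the node set. -/
noncomputable def numComponents (n : ℕ) (π ρ : ℕ → ℕ) : ℕ :=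
  ((nodes n).image (fun a => (nodes n).filter (fun b => compRel n π ρ a b))).card



-- ===== auxiliary material for statement17 =====
open Finset

def en (c : ℕ → Bool) (x : ℕ) : ℕ := if c x = c 1 then 1 else 0
def dsc (c : ℕ → Bool) (x : ℕ) : ℕ :=
  ((Finset.Ico 1 x).filter (fun i => c i = c 1 ∧ ¬ c (i+1) = c 1)).card
def Acnt (c : ℕ → Bool) (x : ℕ) : ℕ :=
  ((Finset.Ico 1 x).filter (fun i => c i = c (i+1))).card
def hgt (c : ℕ → Bool) (x : ℕ) : ℕ := x - dsc c x

lemma card_filter_insert_Ico (p : ℕ → Prop) [DecidablePred p] (x : ℕ) (hx : 1 ≤ x) :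
    ((Finset.Ico 1 (x+1)).filter p).card
      = ((Finset.Ico 1 x).filter p).card + (if p x then 1 else 0) := by
  rw [Nat.Ico_succ_right_eq_insert_Ico hx, Finset.filter_insert]
  split
  · rw [Finset.card_insert_of_notMem (fun h => by simp [Finset.mem_filter] at h)]
  · simp

lemma keyG (c : ℕ → Bool) : ∀ x, 1 ≤ x → x = 2 * dsc c x + Acnt c x + en c x := by
  intro x hx
  induction x, hx using Nat.le_induction with
  | base => simp [dsc, Acnt, en]
  | succ x hx ih =>
    have hd := card_filter_insert_Ico (fun i => c i = c 1 ∧ ¬ c (i+1) = c 1) x hx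
    have ha := card_filter_insert_Ico (fun i => c i = c (i+1)) x hx
    simp only [dsc, Acnt] at *
    cases hbx : c x <;> cases hbx1 : c (x+1) <;> cases hb1 : c 1 <;>
      simp [en, hbx, hbx1, hb1] at * <;> omega

lemma dsc_le (c : ℕ → Bool) (x : ℕ) : dsc c x ≤ x := by
  rcases Nat.eq_zero_or_pos x with rfl | hx
  · simp [dsc]
  · have := keyG c x hx; omega

lemma Acnt_mono (c : ℕ → Bool) {m M : ℕ} (h : m ≤ M) : Acnt c m ≤ Acnt c M := by
  apply Finset.card_le_card
  exact Finset.filter_subset_filter _ (Finset.Ico_subset_Ico le_rfl h)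

lemma Acnt_split (c : ℕ → Bool) {m M : ℕ} (h1 : 1 ≤ m) (h : m ≤ M) :
    Acnt c M = Acnt c m + ((Finset.Ico m M).filter (fun i => c i = c (i+1))).card := by
  rw [Acnt, Acnt, ← Finset.Ico_union_Ico_eq_Ico h1 h, Finset.filter_union,
    Finset.card_union_of_disjoint]
  exact Finset.disjoint_filter_filter (Finset.Ico_disjoint_Ico_consecutive 1 m M)

lemma hgt_eq (c : ℕ → Bool) (x : ℕ) : hgt c x = x - dsc c x := rfl

lemma en_sum (c : ℕ → Bool) {m M : ℕ} (h : c m ≠ c M) : en c m + en c M = 1 := by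
  unfold en
  cases h1 : c 1 <;> cases h2 : c m <;> cases h3 : c M <;> simp_all

lemma pairSign_symm (c : ℕ → Bool) (b w : ℕ) : pairSign c b w = pairSign c w b := by
  unfold pairSign aCount
  rw [max_comm, min_comm]

lemma pairSign_eq (c : ℕ → Bool) {m M : ℕ} (hm : 1 ≤ m) (hmM : m < M) (hne : c m ≠ c M) :
    pairSign c m M = (-1 : ℤ)^(hgt c m + hgt c M + en c M) := by
  have hGm := keyG c m hm
  have hGM := keyG c M (le_trans hm hmM.le)
  have hA := Acnt_split c hm hmM.le
  have hen := en_sum c hne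
  have hmin : min m M = m := min_eq_left hmM.le
  have hmax : max m M = M := max_eq_right hmM.le
  have haC : aCount c m M = ((Finset.Ico m M).filter (fun i => c i = c (i+1))).card := by
    rw [aCount, hmin, hmax]
  have hhm : hgt c m = m - dsc c m := rfl
  have hhM : hgt c M = M - dsc c M := rfl
  have e1 : M - m + aCount c m M - 1 = 2 * (hgt c M - hgt c m - en c M) := by omega
  have e2 : (hgt c M - hgt c m - en c M) + 2 * (hgt c m + en c M)
      = hgt c m + hgt c M + en c M := by omega
  rw [pairSign, hmin, hmax, e1, Nat.mul_div_cancel_left _ (by norm_num), ← e2,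
    pow_add, pow_mul, neg_one_sq, one_pow, mul_one]

lemma tau_eq (c : ℕ → Bool) {b w : ℕ} (hb1 : 1 ≤ b) (hw1 : 1 ≤ w)
    (hcb : c b = true) (hcw : c w = false) :
    (if w < b then (-1:ℤ) else 1) * pairSign c b w
      = (if c 1 = true then 1 else -1) * (-1:ℤ)^(hgt c b + hgt c w) := by
  have hne : c b ≠ c w := by rw [hcb, hcw]; simp
  rcases lt_trichotomy w b with h | h | h
  · rw [if_pos h, pairSign_symm, pairSign_eq c hw1 h (by rw [hcb, hcw]; simp)]
    cases h1 : c 1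
    · have : en c b = 0 := by unfold en; rw [hcb, h1]; simp
      rw [this, if_neg (by simp)]
      ring_nf
    · have : en c b = 1 := by unfold en; rw [hcb, h1]; simp
      rw [this, if_pos rfl, pow_add, pow_add, pow_one]
      ring_nf
  · exact absurd (by rw [h]) hne
  · rw [if_neg (by omega), pairSign_eq c hb1 h hne]
    cases h1 : c 1
    · have : en c w = 1 := by unfold en; rw [hcw, h1]; simp
      rw [this, if_neg (by simp), pow_add, pow_one]
      ring
    · have : en c w = 0 := by unfold en; rw [hcw, h1]; simp
      rw [this, if_pos rfl]
      ring


def prevNode (n m : ℕ) : ℕ := if m = 1 then 2 * n else m - 1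
def chg (n : ℕ) (c : ℕ → Bool) : Finset ℕ :=
  (nodes n).filter (fun m => ¬ c m = c (nextNode n m))

lemma mem_nodes {n m : ℕ} : m ∈ nodes n ↔ 1 ≤ m ∧ m ≤ 2 * n := by simp [nodes]

lemma next_mem {n m : ℕ} (h : m ∈ nodes n) : nextNode n m ∈ nodes n := by
  rw [mem_nodes] at *; unfold nextNode; split <;> omega

lemma prev_mem {n m : ℕ} (h : m ∈ nodes n) : prevNode n m ∈ nodes n := by
  rw [mem_nodes] at *; unfold prevNode; split <;> omega

lemma prev_next {n m : ℕ} (h : m ∈ nodes n) : prevNode n (nextNode n m) = m := by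
  rw [mem_nodes] at h; unfold nextNode prevNode; split <;> split <;> omega

lemma next_prev {n m : ℕ} (h : m ∈ nodes n) : nextNode n (prevNode n m) = m := by
  rw [mem_nodes] at h; unfold nextNode prevNode; split <;> split <;> omega

lemma sum_reindex_next {n : ℕ} {M : Type*} [AddCommMonoid M] (f : ℕ → ℕ → M) :
    ∑ m ∈ nodes n, f m (nextNode n m) = ∑ m ∈ nodes n, f (prevNode n m) m := by
  apply Finset.sum_nbij' (i := nextNode n) (j := prevNode n)
  · exact fun a ha => next_mem ha
  · exact fun a ha => prev_mem ha
  · exact fun a ha => prev_next ha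
  · exact fun a ha => next_prev ha
  · intro a ha; rw [prev_next ha]

lemma card_reindex_next {n : ℕ} (p : ℕ → Prop) [DecidablePred p] :
    ((nodes n).filter (fun m => p (nextNode n m))).card = ((nodes n).filter p).card := by
  apply Finset.card_nbij' (i := nextNode n) (j := prevNode n)
  · intro a ha; simp only [mem_coe, mem_filter] at *; exact ⟨next_mem ha.1, ha.2⟩
  · intro a ha; simp only [mem_coe, mem_filter] at *
    refine ⟨prev_mem ha.1, ?_⟩
    rw [next_prev ha.1]; exact ha.2
  · intro a ha; rw [mem_coe, mem_filter] at ha; exact prev_next ha.1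
  · intro a ha; rw [mem_coe, mem_filter] at ha; exact next_prev ha.1

-- Gauss-type sums
lemma sum_nodes_id (n : ℕ) : ∑ x ∈ nodes n, x = n * (2 * n + 1) := by
  induction n with
  | zero => simp [nodes]
  | succ n ih =>
    have h : nodes (n+1) = insert (2*n+2) (insert (2*n+1) (nodes n)) := by
      ext x; simp [mem_nodes, Finset.mem_insert]; omega
    rw [h, Finset.sum_insert (by simp [mem_nodes, Finset.mem_insert] <;> omega),
      Finset.sum_insert (by simp [mem_nodes] <;> omega), ih]
    ring

lemma sum_nodes_halves (n : ℕ) : ∑ x ∈ nodes n, x / 2 = n * n := by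
  induction n with
  | zero => simp [nodes]
  | succ n ih =>
    have h : nodes (n+1) = insert (2*n+2) (insert (2*n+1) (nodes n)) := by
      ext x; simp [mem_nodes, Finset.mem_insert]; omega
    rw [h, Finset.sum_insert (by simp [mem_nodes, Finset.mem_insert] <;> omega),
      Finset.sum_insert (by simp [mem_nodes] <;> omega), ih]
    have : (n+1)*(n+1) = n*n + 2*n + 1 := by ring
    rw [this]; omega

-- rank lemma
lemma rank_filter_card : ∀ (k : ℕ) (Y : Finset ℕ), Y.card = k → ∀ t, t ≤ k →
    (Y.filter (fun y => (Y.filter (· ≤ y)).card ≤ t)).card = t := by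
  intro k
  induction k with
  | zero =>
    intro Y hY t ht
    rw [Finset.card_eq_zero] at hY
    subst hY; simp at ht; simp [ht]
  | succ k ih =>
    intro Y hY t ht
    have hne : Y.Nonempty := by rw [← Finset.card_pos, hY]; omega
    set M := Y.max' hne with hMdef
    have hM : M ∈ Y := Y.max'_mem hne
    have hMmax : ∀ y ∈ Y, y ≤ M := fun y hy => Y.le_max' y hy
    rcases eq_or_lt_of_le ht with rfl | ht'
    · have hall : Y.filter (fun y => (Y.filter (· ≤ y)).card ≤ k+1) = Y :=
        Finset.filter_eq_self.2 (fun y _ => le_trans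
          (Finset.card_le_card (Finset.filter_subset _ _)) (le_of_eq hY))
      rw [hall, hY]
    · set Y' := Y.erase M with hY'def
      have hY' : Y'.card = k := by rw [hY'def, Finset.card_erase_of_mem hM, hY]; omega
      have hfilt : ∀ y ∈ Y', Y.filter (· ≤ y) = Y'.filter (· ≤ y) := by
        intro y hy
        have hyM : y < M := lt_of_le_of_ne (hMmax y (Finset.mem_of_mem_erase hy))
          (Finset.ne_of_mem_erase hy)
        ext z
        simp only [Finset.mem_filter, hY'def, Finset.mem_erase]
        constructor
        · rintro ⟨hz, hzy⟩; exact ⟨⟨by omega, hz⟩, hzy⟩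
        · rintro ⟨⟨_, hz⟩, hzy⟩; exact ⟨hz, hzy⟩
      have hsets : Y.filter (fun y => (Y.filter (· ≤ y)).card ≤ t)
          = Y'.filter (fun y => (Y'.filter (· ≤ y)).card ≤ t) := by
        ext y
        simp only [Finset.mem_filter]
        constructor
        · rintro ⟨hy, hcond⟩
          have hyM : y ≠ M := by
            intro hh
            have hfe : Y.filter (· ≤ y) = Y :=
              Finset.filter_eq_self.2 (fun z hz => by rw [hh]; exact hMmax z hz)
            rw [hfe, hY] at hcond; omega
          have hy' : y ∈ Y' := Finset.mem_erase.2 ⟨hyM, hy⟩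
          exact ⟨hy', by rw [← hfilt y hy']; exact hcond⟩
        · rintro ⟨hy', hcond⟩
          exact ⟨Finset.mem_of_mem_erase hy', by rw [hfilt y hy']; exact hcond⟩
      rw [hsets, ih Y' hY' t (by omega)]


def DescS (n : ℕ) (c : ℕ → Bool) : Finset ℕ :=
  (Finset.Ico 1 (2*n)).filter (fun i => c i = c 1 ∧ ¬ c (i+1) = c 1)
def eez (c : ℕ → Bool) (m : ℕ) : ZMod 2 := if c m = c 1 then 1 else 0
def Xs (n : ℕ) (c : ℕ → Bool) : Finset ℕ := (couples n c).filter (fun m => c m = c 1)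
def Ys (n : ℕ) (c : ℕ → Bool) : Finset ℕ := (couples n c).filter (fun m => ¬ c m = c 1)


lemma zadd_self : ∀ z : ZMod 2, z + z = 0 := by decide
lemma ztwo : (2 : ZMod 2) = 0 := by decide
lemma zsq : ∀ z : ZMod 2, z * z = z := by decide

lemma card_split {α : Type} (s : Finset α) (P Q : α → Prop)
    [DecidablePred P] [DecidablePred Q] :
    (s.filter (fun m => P m ∧ Q m)).card + (s.filter (fun m => P m ∧ ¬ Q m)).card
      = (s.filter P).card := by
  rw [← Finset.filter_filter, ← Finset.filter_filter]
  exact Finset.card_filter_add_card_filter_not Q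

-- (b) M1
lemma dsc_eq_desc {n x : ℕ} (c : ℕ → Bool) (hx : x ∈ nodes n) :
    dsc c x = ((DescS n c).filter (· < x)).card := by
  rw [mem_nodes] at hx
  unfold dsc DescS
  rw [Finset.filter_filter]
  congr 1
  ext i
  simp only [Finset.mem_filter, Finset.mem_Ico]
  constructor
  · rintro ⟨⟨h1, h2⟩, hp⟩; exact ⟨⟨h1, by omega⟩, hp, h2⟩
  · rintro ⟨⟨h1, h2⟩, hp, h3⟩; exact ⟨⟨h1, h3⟩, hp⟩

lemma sum_dsc (n : ℕ) (c : ℕ → Bool) :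
    ∑ x ∈ nodes n, dsc c x = ∑ i ∈ DescS n c, (2*n - i) := by
  have h1 : ∀ x ∈ nodes n, dsc c x = ∑ i ∈ DescS n c, if i < x then 1 else 0 := by
    intro x hx
    rw [dsc_eq_desc c hx, Finset.card_filter]
  rw [Finset.sum_congr rfl h1, Finset.sum_comm]
  apply Finset.sum_congr rfl
  intro i hi
  have hi' : 1 ≤ i ∧ i < 2*n := by
    have := Finset.mem_filter.1 hi
    simpa [Finset.mem_Ico] using this.1
  rw [← Finset.card_filter]
  have : (nodes n).filter (fun x => i < x) = Finset.Icc (i+1) (2*n) := by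
    ext m; simp only [Finset.mem_filter, mem_nodes, Finset.mem_Icc]; omega
  rw [this, Nat.card_Icc]; omega

lemma M1 (n : ℕ) (c : ℕ → Bool) :
    (∑ x ∈ nodes n, ((hgt c x : ℕ) : ZMod 2))
      = (n : ZMod 2) + ∑ i ∈ DescS n c, ((i : ℕ) : ZMod 2) := by
  have hterm : ∀ x ∈ nodes n, ((hgt c x : ℕ) : ZMod 2) = (x : ZMod 2) + (dsc c x : ZMod 2) := by
    intro x hx
    rw [hgt, Nat.cast_sub (dsc_le c x), CharTwo.sub_eq_add]
  rw [Finset.sum_congr rfl hterm, Finset.sum_add_distrib]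
  have e1 : (∑ x ∈ nodes n, (x : ZMod 2)) = (n : ZMod 2) := by
    rw [← Nat.cast_sum, sum_nodes_id]
    push_cast
    rw [ztwo]; ring
  have e2 : (∑ x ∈ nodes n, (dsc c x : ZMod 2)) = ∑ i ∈ DescS n c, ((i : ℕ) : ZMod 2) := by
    rw [← Nat.cast_sum, sum_dsc, Nat.cast_sum]
    apply Finset.sum_congr rfl
    intro i hi
    have hi' : i ≤ 2*n := by
      have := Finset.mem_filter.1 hi
      simp only [Finset.mem_Ico] at this
      omega
    rw [Nat.cast_sub hi', CharTwo.sub_eq_add]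
    push_cast
    rw [ztwo]; ring
  rw [e1, e2]

-- (c) balance
lemma card_cu (n : ℕ) (c : ℕ → Bool)
    (hB : ((nodes n).filter (fun i => c i = true)).card = n)
    (hW : ((nodes n).filter (fun i => c i = false)).card = n) :
    ((nodes n).filter (fun m => c m = c 1)).card = n
      ∧ ((nodes n).filter (fun m => ¬ c m = c 1)).card = n := by
  cases h1 : c 1
  · refine ⟨hW, ?_⟩
    have h : (nodes n).filter (fun m => ¬ c m = false) = (nodes n).filter (fun i => c i = true) :=
      Finset.filter_congr (fun m _ => by cases c m <;> simp)
    rw [h]; exact hB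
  · refine ⟨hB, ?_⟩
    have h : (nodes n).filter (fun m => ¬ c m = true) = (nodes n).filter (fun i => c i = false) :=
      Finset.filter_congr (fun m _ => by cases c m <;> simp)
    rw [h]; exact hW

lemma sum_eez (n : ℕ) (c : ℕ → Bool)
    (hU : ((nodes n).filter (fun m => c m = c 1)).card = n) :
    (∑ m ∈ nodes n, eez c m) = (n : ZMod 2) := by
  unfold eez
  rw [Finset.sum_boole, hU]

-- (d) |Xs| = |Ys|
lemma XY_card (n : ℕ) (c : ℕ → Bool)
    (hU : ((nodes n).filter (fun m => c m = c 1)).card = n)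
    (hV : ((nodes n).filter (fun m => ¬ c m = c 1)).card = n) :
    (Xs n c).card = (Ys n c).card := by
  classical
  have e1 := card_split (nodes n) (fun m => c m = c 1) (fun m => c (nextNode n m) = c 1)
  have e2 := card_split (nodes n) (fun m => ¬ c m = c 1) (fun m => c (nextNode n m) = c 1)
  have e3 := card_split (nodes n) (fun m => c (nextNode n m) = c 1) (fun m => c m = c 1)
  have e4 : ((nodes n).filter (fun m => c (nextNode n m) = c 1)).card = n :=
    (card_reindex_next (fun m => c m = c 1)).trans hU
  have c1 : ((nodes n).filter (fun m => c (nextNode n m) = c 1 ∧ c m = c 1)).card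
      = ((nodes n).filter (fun m => c m = c 1 ∧ c (nextNode n m) = c 1)).card := by
    congr 1; ext m; simp only [Finset.mem_filter]; tauto
  have c2 : ((nodes n).filter (fun m => c (nextNode n m) = c 1 ∧ ¬ c m = c 1)).card
      = ((nodes n).filter (fun m => ¬ c m = c 1 ∧ c (nextNode n m) = c 1)).card := by
    congr 1; ext m; simp only [Finset.mem_filter]; tauto
  have hXc : (Xs n c).card
      = ((nodes n).filter (fun m => c m = c 1 ∧ c (nextNode n m) = c 1)).card := by
    unfold Xs couples
    rw [Finset.filter_filter]
    congr 1; ext m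
    simp only [Finset.mem_filter]
    cases hm1 : c m <;> cases hm2 : c (nextNode n m) <;> cases hm3 : c 1 <;> simp_all
  have hYc : (Ys n c).card
      = ((nodes n).filter (fun m => ¬ c m = c 1 ∧ ¬ c (nextNode n m) = c 1)).card := by
    unfold Ys couples
    rw [Finset.filter_filter]
    congr 1; ext m
    simp only [Finset.mem_filter]
    cases hm1 : c m <;> cases hm2 : c (nextNode n m) <;> cases hm3 : c 1 <;> simp_all
  omega

-- (e) phi lemmas
lemma rnk_strict {s : Finset ℕ} {a b : ℕ} (hb : b ∈ s) (hab : a < b) :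
    (s.filter (· ≤ a)).card < (s.filter (· ≤ b)).card := by
  have hsub : s.filter (· ≤ a) ⊆ s.filter (· ≤ b) := fun z hz => by
    rw [Finset.mem_filter] at *
    exact ⟨hz.1, by omega⟩
  exact Finset.card_lt_card ((Finset.ssubset_iff_of_subset hsub).2
    ⟨b, Finset.mem_filter.2 ⟨hb, le_rfl⟩, fun h => by
      have := (Finset.mem_filter.1 h).2; omega⟩)

lemma rnk_pos {s : Finset ℕ} {a : ℕ} (ha : a ∈ s) : 1 ≤ (s.filter (· ≤ a)).card :=
  Finset.card_pos.2 ⟨a, Finset.mem_filter.2 ⟨ha, le_rfl⟩⟩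

lemma phi_X {n : ℕ} {c : ℕ → Bool} {m : ℕ} (hm : m ∈ Xs n c) :
    phiCouple n c m = 2 * ((Xs n c).filter (· ≤ m)).card := by
  have hc : c m = c 1 := (Finset.mem_filter.1 hm).2
  rw [phiCouple, if_pos hc]
  congr 2
  unfold Xs
  rw [Finset.filter_filter]
  apply Finset.filter_congr
  intro x _
  rw [hc]

lemma phi_Y {n : ℕ} {c : ℕ → Bool} {m : ℕ} (hm : m ∈ Ys n c) :
    phiCouple n c m = 2 * ((Ys n c).filter (· ≤ m)).card - 1 := by
  have hc : ¬ c m = c 1 := (Finset.mem_filter.1 hm).2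
  rw [phiCouple, if_neg hc]
  congr 3
  unfold Ys
  rw [Finset.filter_filter]
  apply Finset.filter_congr
  intro x _
  constructor
  · rintro ⟨h1, h2⟩
    refine ⟨fun hx => hc ?_, h2⟩
    rw [← h1]; exact hx
  · rintro ⟨h1, h2⟩
    refine ⟨?_, h2⟩
    cases hx : c x <;> cases hm' : c m <;> cases h1' : c 1 <;> simp_all

lemma mem_Xs (n : ℕ) (c : ℕ → Bool) {m : ℕ} (hm : m ∈ Xs n c) :
    m ∈ couples n c ∧ c m = c 1 := by
  have := Finset.mem_filter.1 hm; exact ⟨this.1, this.2⟩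

lemma mem_Ys (n : ℕ) (c : ℕ → Bool) {m : ℕ} (hm : m ∈ Ys n c) :
    m ∈ couples n c ∧ ¬ c m = c 1 := by
  have := Finset.mem_filter.1 hm; exact ⟨this.1, this.2⟩

lemma Xs_ne_Ys {n : ℕ} {c : ℕ → Bool} {x y : ℕ} (hx : x ∈ Xs n c) (hy : y ∈ Ys n c) :
    x ≠ y := by
  intro h
  exact (mem_Ys n c hy).2 (h ▸ (mem_Xs n c hx).2)

lemma M2 (n : ℕ) (c : ℕ → Bool) (hXY : (Xs n c).card = (Ys n c).card) :
    ((((couples n c ×ˢ couples n c).filter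
        (fun p => p.1 < p.2 ∧ phiCouple n c p.2 < phiCouple n c p.1)).card : ZMod 2))
      = ∑ x ∈ Xs n c, (((couples n c).filter (· ≤ x)).card : ZMod 2) := by
  classical
  set K := (couples n c ×ˢ couples n c).filter
      (fun p => p.1 < p.2 ∧ phiCouple n c p.2 < phiCouple n c p.1) with hKdef
  set A := (Xs n c ×ˢ Ys n c).filter
      (fun p => ((Ys n c).filter (· ≤ p.2)).card ≤ ((Xs n c).filter (· ≤ p.1)).card) with hAdef
  set B := (Xs n c ×ˢ Ys n c).filter (fun p => p.2 < p.1) with hBdef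
  have hsplit := Finset.card_filter_add_card_filter_not
    (s := K) (fun p : ℕ × ℕ => c p.1 = c 1)
  have hT1 : K.filter (fun p => c p.1 = c 1) = A.filter (fun p => p.1 < p.2) := by
    ext ⟨a, b⟩
    rw [hKdef, hAdef]
    simp only [Finset.mem_filter, Finset.mem_product]
    constructor
    · rintro ⟨⟨⟨ha, hb⟩, hab, hphi⟩, hc1⟩
      have haX : a ∈ Xs n c := Finset.mem_filter.2 ⟨ha, hc1⟩
      have hbY : b ∈ Ys n c := by
        by_contra hbY
        have hbX : b ∈ Xs n c := Finset.mem_filter.2 ⟨hb, by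
          by_contra h
          exact hbY (Finset.mem_filter.2 ⟨hb, h⟩)⟩
        rw [phi_X haX, phi_X hbX] at hphi
        have h2 := rnk_strict (s := Xs n c) hbX hab
        omega
      refine ⟨⟨⟨haX, hbY⟩, ?_⟩, hab⟩
      rw [phi_X haX, phi_Y hbY] at hphi
      have h2 : 1 ≤ (((Ys n c)).filter (· ≤ b)).card := rnk_pos hbY
      omega
    · rintro ⟨⟨⟨haX, hbY⟩, hr⟩, hab⟩
      have ha := (mem_Xs n c haX).1
      have hb := (mem_Ys n c hbY).1
      refine ⟨⟨⟨ha, hb⟩, hab, ?_⟩, (mem_Xs n c haX).2⟩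
      rw [phi_X haX, phi_Y hbY]
      have h2 : 1 ≤ (((Ys n c)).filter (· ≤ b)).card := rnk_pos hbY
      omega
  have hT2card : (K.filter (fun p => ¬ c p.1 = c 1)).card
      = (B.filter (fun p => ¬ ((Ys n c).filter (· ≤ p.2)).card
          ≤ ((Xs n c).filter (· ≤ p.1)).card)).card := by
    apply Finset.card_nbij' (i := Prod.swap) (j := Prod.swap)
    · rintro ⟨a, b⟩ hab
      rw [hKdef] at hab
      rw [hBdef]
      simp only [Finset.mem_coe, Finset.mem_filter, Finset.mem_product, Prod.swap_prod_mk,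
        Prod.fst_swap, Prod.snd_swap] at *
      obtain ⟨⟨⟨ha, hb⟩, habl, hphi⟩, hc1⟩ := hab
      have haY : a ∈ Ys n c := Finset.mem_filter.2 ⟨ha, hc1⟩
      have hbX : b ∈ Xs n c := by
        by_contra hbX
        have hbY : b ∈ Ys n c := Finset.mem_filter.2 ⟨hb, by
          by_contra h
          exact hbX (Finset.mem_filter.2 ⟨hb, h⟩)⟩
        rw [phi_Y haY, phi_Y hbY] at hphi
        have h2 := rnk_strict (s := Ys n c) hbY habl
        have h3 : 1 ≤ ((Ys n c).filter (· ≤ a)).card := rnk_pos haY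
        omega
      rw [phi_Y haY, phi_X hbX] at hphi
      have h3 : 1 ≤ ((Ys n c).filter (· ≤ a)).card := rnk_pos haY
      refine ⟨⟨⟨hbX, haY⟩, habl⟩, ?_⟩
      omega
    · rintro ⟨x, y⟩ hxy
      rw [hBdef] at hxy
      rw [hKdef]
      simp only [Finset.mem_coe, Finset.mem_filter, Finset.mem_product, Prod.swap_prod_mk,
        Prod.fst_swap, Prod.snd_swap] at *
      obtain ⟨⟨⟨hxX, hyY⟩, hyx⟩, hr⟩ := hxy
      have hx := (mem_Xs n c hxX).1
      have hy := (mem_Ys n c hyY).1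
      refine ⟨⟨⟨hy, hx⟩, hyx, ?_⟩, (mem_Ys n c hyY).2⟩
      rw [phi_X hxX, phi_Y hyY]
      have h3 : 1 ≤ ((Ys n c).filter (· ≤ y)).card := rnk_pos hyY
      omega
    · intro a _; rfl
    · intro a _; rfl
  have e1 := Finset.card_filter_add_card_filter_not
    (s := A) (fun p : ℕ × ℕ => p.1 < p.2)
  have e2 := Finset.card_filter_add_card_filter_not
    (s := B) (fun p : ℕ × ℕ => ((Ys n c).filter (· ≤ p.2)).card
      ≤ ((Xs n c).filter (· ≤ p.1)).card)
  have hAC : A.filter (fun p => ¬ p.1 < p.2)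
      = B.filter (fun p => ((Ys n c).filter (· ≤ p.2)).card
          ≤ ((Xs n c).filter (· ≤ p.1)).card) := by
    ext ⟨a, b⟩
    rw [hAdef, hBdef]
    simp only [Finset.mem_filter, Finset.mem_product]
    constructor
    · rintro ⟨⟨⟨haX, hbY⟩, hr⟩, hnl⟩
      have hne := Xs_ne_Ys haX hbY
      exact ⟨⟨⟨haX, hbY⟩, by omega⟩, hr⟩
    · rintro ⟨⟨⟨haX, hbY⟩, hl⟩, hr⟩
      exact ⟨⟨⟨haX, hbY⟩, hr⟩, by omega⟩
  have hA : A.card = ∑ x ∈ Xs n c, ((Xs n c).filter (· ≤ x)).card := by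
    rw [hAdef, Finset.card_filter, Finset.sum_product]
    apply Finset.sum_congr rfl
    intro x hx
    dsimp only
    rw [← Finset.card_filter]
    convert rank_filter_card (Ys n c).card (Ys n c) rfl ((Xs n c).filter (· ≤ x)).card ?_
    rw [← hXY]
    exact Finset.card_le_card (Finset.filter_subset _ _)
  have hB : B.card = ∑ x ∈ Xs n c, ((Ys n c).filter (· ≤ x)).card := by
    rw [hBdef, Finset.card_filter, Finset.sum_product]
    apply Finset.sum_congr rfl
    intro x hx
    dsimp only
    rw [← Finset.card_filter]
    congr 1
    apply Finset.filter_congr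
    intro y hy
    have hne := Xs_ne_Ys hx hy
    constructor <;> intro h <;> omega
  have hT1c := congrArg Finset.card hT1
  have hACc := congrArg Finset.card hAC
  have hKcard : K.card
      + 2 * (B.filter (fun p => ((Ys n c).filter (· ≤ p.2)).card
          ≤ ((Xs n c).filter (· ≤ p.1)).card)).card
      = A.card + B.card := by omega
  have hcast := congrArg (fun k : ℕ => (k : ZMod 2)) hKcard
  simp only [Nat.cast_add, Nat.cast_mul, Nat.cast_ofNat] at hcast
  rw [ztwo, zero_mul, add_zero] at hcast
  rw [hcast, hA, hB, Nat.cast_sum, Nat.cast_sum, ← Finset.sum_add_distrib]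
  apply Finset.sum_congr rfl
  intro x hx
  have hcs := card_split (couples n c) (fun m => m ≤ x) (fun m => c m = c 1)
  have i1 : ((couples n c).filter (fun m => m ≤ x ∧ c m = c 1)).card
      = ((Xs n c).filter (· ≤ x)).card := by
    apply congrArg Finset.card
    ext m
    simp only [Xs, Finset.mem_filter]
    tauto
  have i2 : ((couples n c).filter (fun m => m ≤ x ∧ ¬ c m = c 1)).card
      = ((Ys n c).filter (· ≤ x)).card := by
    apply congrArg Finset.card
    ext m
    simp only [Ys, Finset.mem_filter]
    tauto
  have hsum : ((Xs n c).filter (· ≤ x)).card + ((Ys n c).filter (· ≤ x)).card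
      = ((couples n c).filter (· ≤ x)).card := by omega
  rw [← hsum]
  push_cast
  ring

lemma pos_cast {n : ℕ} {c : ℕ → Bool} {x : ℕ} (hx : x ∈ Xs n c) :
    (((couples n c).filter (· ≤ x)).card : ZMod 2) = (x : ZMod 2) := by
  obtain ⟨hxc, hcx⟩ := mem_Xs n c hx
  have hxn : x ∈ nodes n := (Finset.mem_filter.1 hxc).1
  have hxcpl : c x = c (nextNode n x) := (Finset.mem_filter.1 hxc).2
  rw [mem_nodes] at hxn
  -- couples ∩ (≤ x) and chg ∩ (≤ x) partition nodes ∩ (≤ x)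
  have hs := card_split (nodes n) (fun m => m ≤ x) (fun m => c m = c (nextNode n m))
  have i0 : ((nodes n).filter (fun m => m ≤ x)).card = x := by
    have : (nodes n).filter (fun m => m ≤ x) = Finset.Icc 1 x := by
      ext m; simp only [Finset.mem_filter, mem_nodes, Finset.mem_Icc]; omega
    rw [this, Nat.card_Icc]; omega
  have i1 : ((nodes n).filter (fun m => m ≤ x ∧ c m = c (nextNode n m))).card
      = ((couples n c).filter (· ≤ x)).card := by
    unfold couples
    rw [Finset.filter_filter]
    congr 1; ext m; simp only [Finset.mem_filter]; tauto
  have i2 : (nodes n).filter (fun m => m ≤ x ∧ ¬ c m = c (nextNode n m))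
      = (Finset.Ico 1 x).filter (fun i => ¬ c i = c (i+1)) := by
    ext i
    simp only [Finset.mem_filter, mem_nodes, Finset.mem_Ico]
    constructor
    · rintro ⟨⟨h1, h2⟩, h3, h4⟩
      have hix : i ≠ x := fun h => h4 (h ▸ hxcpl)
      have hi2n : i ≠ 2*n := by
        intro h
        have : x = 2*n := by omega
        omega
      have hnext : nextNode n i = i + 1 := if_neg (by omega)
      rw [hnext] at h4
      exact ⟨⟨h1, by omega⟩, h4⟩
    · rintro ⟨⟨h1, h2⟩, h3⟩
      have hnext : nextNode n i = i + 1 := if_neg (by omega)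
      rw [hnext]
      exact ⟨⟨h1, by omega⟩, by omega, h3⟩
  have i3 := Finset.card_filter_add_card_filter_not
    (s := Finset.Ico 1 x) (fun i => c i = c (i+1))
  have i4 : (Finset.Ico 1 x).card = x - 1 := by rw [Nat.card_Ico]
  have hG := keyG c x hxn.1
  have hen : en c x = 1 := by unfold en; rw [if_pos hcx]
  have hfin : ((couples n c).filter (· ≤ x)).card + 2 * dsc c x = x := by
    rw [i2] at hs
    unfold Acnt at hG
    omega
  have := congrArg (fun k : ℕ => (k : ZMod 2)) hfin
  simp only [Nat.cast_add, Nat.cast_mul, Nat.cast_ofNat] at this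
  rw [ztwo, zero_mul, add_zero] at this
  exact this

lemma tele (n : ℕ) (c : ℕ → Bool) (hn : 1 ≤ n)
    (hU : ((nodes n).filter (fun m => c m = c 1)).card = n) :
    (∑ m ∈ chg n c, ((m/2 : ℕ) : ZMod 2)) = ∑ m ∈ nodes n, (m : ZMod 2) * eez c m := by
  have honeone : (1 + 1 : ZMod 2) = 0 := rfl
  have s1 : (∑ m ∈ chg n c, ((m/2 : ℕ) : ZMod 2))
      = ∑ m ∈ nodes n, (eez c m + eez c (nextNode n m)) * ((m/2 : ℕ) : ZMod 2) := by
    unfold chg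
    rw [Finset.sum_filter]
    apply Finset.sum_congr rfl
    intro m _
    unfold eez
    cases h1 : c m <;> cases h2 : c (nextNode n m) <;> cases h3 : c 1 <;>
      simp [h1, h2, h3, honeone]
  rw [s1]
  have s2 : ∀ m ∈ nodes n, (eez c m + eez c (nextNode n m)) * ((m/2 : ℕ) : ZMod 2)
      = eez c m * ((m/2 : ℕ) : ZMod 2) + eez c (nextNode n m) * ((m/2 : ℕ) : ZMod 2) := by
    intro m _; ring
  rw [Finset.sum_congr rfl s2, Finset.sum_add_distrib]
  have s3 : (∑ m ∈ nodes n, eez c (nextNode n m) * ((m/2 : ℕ) : ZMod 2))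
      = ∑ m ∈ nodes n, eez c m * ((prevNode n m / 2 : ℕ) : ZMod 2) :=
    sum_reindex_next (fun a b => eez c b * ((a/2 : ℕ) : ZMod 2))
  rw [s3, ← Finset.sum_add_distrib]
  have s4 : ∀ m ∈ nodes n, eez c m * ((m/2 : ℕ) : ZMod 2)
        + eez c m * ((prevNode n m / 2 : ℕ) : ZMod 2)
      = eez c m * (((m/2 : ℕ) : ZMod 2) + ((prevNode n m / 2 : ℕ) : ZMod 2)) := by
    intro m _; ring
  rw [Finset.sum_congr rfl s4]
  have hins : nodes n = insert 1 (Finset.Icc 2 (2*n)) := by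
    ext m; simp only [mem_nodes, Finset.mem_insert, Finset.mem_Icc]; omega
  have h1mem : (1 : ℕ) ∉ Finset.Icc 2 (2*n) := by simp
  have hterm1 : eez c 1 * (((1/2 : ℕ) : ZMod 2) + ((prevNode n 1 / 2 : ℕ) : ZMod 2))
      = (n : ZMod 2) := by
    have : prevNode n 1 = 2*n := by unfold prevNode; simp
    rw [this]
    have h2n : (2*n)/2 = n := by omega
    rw [h2n]
    unfold eez
    rw [if_pos rfl]
    norm_num
  have hrest : ∀ m ∈ Finset.Icc 2 (2*n),
      eez c m * (((m/2 : ℕ) : ZMod 2) + ((prevNode n m / 2 : ℕ) : ZMod 2))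
        = eez c m * ((m : ZMod 2) + 1) := by
    intro m hm
    rw [Finset.mem_Icc] at hm
    have hprev : prevNode n m = m - 1 := by unfold prevNode; rw [if_neg (by omega)]
    rw [hprev]
    congr 1
    have hh : m/2 + (m-1)/2 = m - 1 := by omega
    rw [← Nat.cast_add, hh, Nat.cast_sub (by omega), CharTwo.sub_eq_add, Nat.cast_one]
  have hfull : ∀ m ∈ nodes n,
      eez c m * ((m : ZMod 2) + 1) = (m : ZMod 2) * eez c m + eez c m := by
    intro m _; ring
  have hL : (∑ m ∈ nodes n, eez c m * (((m/2 : ℕ) : ZMod 2) + ((prevNode n m / 2 : ℕ) : ZMod 2)))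
      = (n : ZMod 2) + ∑ m ∈ Finset.Icc 2 (2*n), eez c m * ((m : ZMod 2) + 1) := by
    rw [hins, Finset.sum_insert h1mem, hterm1, Finset.sum_congr rfl hrest]
  have hsplit1 : (∑ m ∈ nodes n, eez c m * ((m : ZMod 2) + 1))
      = eez c 1 * (((1:ℕ) : ZMod 2) + 1)
        + ∑ m ∈ Finset.Icc 2 (2*n), eez c m * ((m : ZMod 2) + 1) := by
    rw [hins, Finset.sum_insert h1mem]
  have hz1 : eez c 1 * (((1:ℕ) : ZMod 2) + 1) = 0 := by
    rw [Nat.cast_one, honeone, mul_zero]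
  have hsum2 : (∑ m ∈ nodes n, eez c m * ((m : ZMod 2) + 1))
      = (∑ m ∈ nodes n, (m : ZMod 2) * eez c m) + ∑ m ∈ nodes n, eez c m := by
    rw [Finset.sum_congr rfl hfull, Finset.sum_add_distrib]
  rw [sum_eez n c hU] at hsum2
  have hIcc : (∑ m ∈ Finset.Icc 2 (2*n), eez c m * ((m : ZMod 2) + 1))
      = (∑ m ∈ nodes n, (m : ZMod 2) * eez c m) + (n : ZMod 2) := by
    rw [← hsum2, hsplit1, hz1, zero_add]
  rw [hL, hIcc]
  linear_combination zadd_self (n : ZMod 2)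

lemma mainZ (n : ℕ) (c : ℕ → Bool)
    (hB : ((nodes n).filter (fun i => c i = true)).card = n)
    (hW : ((nodes n).filter (fun i => c i = false)).card = n) :
    (∑ x ∈ nodes n, ((hgt c x : ℕ) : ZMod 2))
      = (((couples n c ×ˢ couples n c).filter
            (fun p => p.1 < p.2 ∧ phiCouple n c p.2 < phiCouple n c p.1)).card : ZMod 2)
        + ∑ m ∈ couples n c, ((m/2 : ℕ) : ZMod 2) := by
  rcases Nat.eq_zero_or_pos n with rfl | hn
  · have h0 : nodes 0 = ∅ := Finset.Icc_eq_empty (by omega)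
    have hc0 : couples 0 c = ∅ := by unfold couples; rw [h0, Finset.filter_empty]
    rw [h0, hc0]
    simp
  obtain ⟨hU, hV⟩ := card_cu n c hB hW
  have hXY := XY_card n c hU hV
  have hM2 := M2 n c hXY
  have hM3 : ∑ x ∈ Xs n c, (((couples n c).filter (· ≤ x)).card : ZMod 2)
      = ∑ x ∈ Xs n c, (x : ZMod 2) := Finset.sum_congr rfl (fun x hx => pos_cast hx)
  have hXsum : (∑ x ∈ Xs n c, (x : ZMod 2)) = ∑ m ∈ couples n c, (m : ZMod 2) * eez c m := by
    unfold Xs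
    rw [Finset.sum_filter]
    apply Finset.sum_congr rfl
    intro m _
    unfold eez
    split <;> simp
  have hDesc : (∑ i ∈ DescS n c, (i : ZMod 2)) = ∑ m ∈ chg n c, (m : ZMod 2) * eez c m := by
    have h1 : (∑ m ∈ chg n c, (m : ZMod 2) * eez c m)
        = ∑ m ∈ (chg n c).filter (fun m => c m = c 1), (m : ZMod 2) := by
      rw [Finset.sum_filter]
      apply Finset.sum_congr rfl
      intro m _
      unfold eez
      split <;> simp
    have h2 : (chg n c).filter (fun m => c m = c 1) = DescS n c := by
      ext i
      unfold chg DescS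
      simp only [Finset.mem_filter, mem_nodes, Finset.mem_Ico]
      constructor
      · rintro ⟨⟨⟨h1', h2'⟩, h3⟩, h4⟩
        have hi2n : i ≠ 2*n := by
          intro h
          apply h3
          have : nextNode n i = 1 := by unfold nextNode; rw [if_pos h]
          rw [this]
          exact h4
        have hnext : nextNode n i = i + 1 := by unfold nextNode; rw [if_neg hi2n]
        rw [hnext] at h3
        refine ⟨⟨h1', by omega⟩, h4, ?_⟩
        intro hcc
        apply h3
        rw [h4, hcc]
      · rintro ⟨⟨h1', h2'⟩, h3, h4⟩
        have hnext : nextNode n i = i + 1 := by unfold nextNode; rw [if_neg (by omega)]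
        rw [hnext]
        exact ⟨⟨⟨h1', by omega⟩, fun hcc => h4 (by rw [← hcc, h3])⟩, h3⟩
    rw [h1, h2]
  have hsp1 : (∑ m ∈ couples n c, (m : ZMod 2) * eez c m)
      + (∑ m ∈ chg n c, (m : ZMod 2) * eez c m)
      = ∑ m ∈ nodes n, (m : ZMod 2) * eez c m :=
    Finset.sum_filter_add_sum_filter_not (nodes n) _ _
  have hsp2 : (∑ m ∈ couples n c, ((m/2 : ℕ) : ZMod 2))
      + (∑ m ∈ chg n c, ((m/2 : ℕ) : ZMod 2))
      = ∑ m ∈ nodes n, ((m/2 : ℕ) : ZMod 2) :=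
    Finset.sum_filter_add_sum_filter_not (nodes n) _ _
  have hhalves : (∑ m ∈ nodes n, ((m/2 : ℕ) : ZMod 2)) = (n : ZMod 2) := by
    rw [← Nat.cast_sum, sum_nodes_halves, Nat.cast_mul, zsq]
  rw [hhalves] at hsp2
  have htel := tele n c hn hU
  rw [M1, hM2, hM3, hXsum, hDesc]
  linear_combination (-1 : ZMod 2) * hsp2 + htel + hsp1
    + ((∑ m ∈ nodes n, (m : ZMod 2) * eez c m)
        - ∑ m ∈ couples n c, (m : ZMod 2) * eez c m) * ztwo


lemma neg_one_pow_congr {a b : ℕ} (h : (a : ZMod 2) = (b : ZMod 2)) :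
    (-1 : ℤ)^a = (-1 : ℤ)^b := by
  have hmod : a % 2 = b % 2 := (ZMod.natCast_eq_natCast_iff a b 2).1 h
  conv_lhs => rw [← Nat.div_add_mod a 2]
  conv_rhs => rw [← Nat.div_add_mod b 2]
  rw [pow_add, pow_add, pow_mul, pow_mul, neg_one_sq, one_pow, one_pow, hmod]

lemma sum_orderEmb {M : Type} [AddCommMonoid M] (s : Finset ℕ) {k : ℕ}
    (hs : s.card = k) (f : ℕ → M) :
    ∑ i : Fin k, f (s.orderEmbOfFin hs i) = ∑ x ∈ s, f x := by
  apply Finset.sum_bij (fun (i : Fin k) _ => s.orderEmbOfFin hs i)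
  · intro a _; exact Finset.orderEmbOfFin_mem s hs a
  · intro a _ b _ h; exact (s.orderEmbOfFin hs).injective h
  · intro b hb
    have hbr : b ∈ Set.range (s.orderEmbOfFin hs) := by
      rw [Finset.range_orderEmbOfFin]; exact hb
    obtain ⟨i, hi⟩ := hbr
    exact ⟨i, Finset.mem_univ i, hi⟩
  · intro a _; rfl

lemma pow_aux (a b i j : ℕ) :
    (-1:ℤ)^(a+i) * ((-1:ℤ)^(b+j)) * (-1:ℤ)^(i+j) = (-1:ℤ)^(a+b) := by
  rw [← pow_add, ← pow_add]
  have h : a + i + (b + j) + (i + j) = (a+b) + 2*(i+j) := by ring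
  rw [h, pow_add, pow_mul, neg_one_sq, one_pow, mul_one]

lemma pm_pow (k : ℕ) : (-1:ℤ)^k = 1 ∨ (-1:ℤ)^k = -1 :=
  (Nat.even_or_odd k).imp Even.neg_one_pow Odd.neg_one_pow

lemma key_sign (n : ℕ) (c : ℕ → Bool)
    (hB' : ((nodes n).filter (fun i => c i = true)).card = n)
    (hW' : ((nodes n).filter (fun i => c i = false)).card = n) :
    (-1:ℤ)^(∑ x ∈ nodes n, hgt c x)
      = signCons n c * (-1:ℤ)^(∑ m ∈ couples n c, m / 2) := by
  rw [signCons, ← pow_add]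
  apply neg_one_pow_congr
  rw [Nat.cast_sum, Nat.cast_add, Nat.cast_sum]
  exact mainZ n c hB' hW'


/-- Lemma 3.0.6: writing `τ(b,w) = (−1)^{[b>w]} sign(b,w)`, and
`b₁ < ⋯ < bₙ`, `w₁ < ⋯ < wₙ` for the black and white nodes, there are row and column
signs `ε, δ` making `τ(b_i, w_j) = ε(i) δ(j) (−1)^{i+j}`, and the product of all signs is
`sign_cons(N) · (−1)^{Σ ⌊nᵢ/2⌋}` if node 1 is black, times an extra `(−1)^n` if node 1 is
white. -/

theorem statement17 (n : ℕ) (c : ℕ → Bool)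
    (hB : (blacks n c).card = n) (hW : (whites n c).card = n) :
    ∃ ε δ : Fin n → ℤ,
      (∀ i, ε i = 1 ∨ ε i = -1) ∧ (∀ j, δ j = 1 ∨ δ j = -1) ∧
      (∀ i j : Fin n,
        (if (whites n c).orderEmbOfFin hW j < (blacks n c).orderEmbOfFin hB i
            then (-1 : ℤ) else 1)
          * pairSign c ((blacks n c).orderEmbOfFin hB i) ((whites n c).orderEmbOfFin hW j)
          = ε i * δ j * (-1 : ℤ) ^ ((i : ℕ) + (j : ℕ))) ∧
      (∏ i, ε i) * (∏ j, δ j)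
        = (if c 1 = true
            then signCons n c * (-1 : ℤ) ^ (∑ m ∈ couples n c, m / 2)
            else (-1 : ℤ) ^ n * signCons n c * (-1 : ℤ) ^ (∑ m ∈ couples n c, m / 2)) := by
  classical
  have hB' : ((nodes n).filter (fun i => c i = true)).card = n := hB
  have hW' : ((nodes n).filter (fun i => c i = false)).card = n := hW
  set σ : ℤ := if c 1 = true then 1 else -1 with hσ
  refine ⟨fun i => (-1 : ℤ)^(hgt c ((blacks n c).orderEmbOfFin hB i) + (i : ℕ)),
          fun j => σ * (-1 : ℤ)^(hgt c ((whites n c).orderEmbOfFin hW j) + (j : ℕ)),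
          ?_, ?_, ?_, ?_⟩
  · intro i; exact pm_pow _
  · intro j
    dsimp only
    rcases pm_pow (hgt c ((whites n c).orderEmbOfFin hW j) + (j : ℕ)) with h | h <;>
      rw [h] <;> rw [hσ] <;> split <;> simp
  · intro i j
    dsimp only
    have hbm0 := Finset.orderEmbOfFin_mem (blacks n c) hB i
    have hwm0 := Finset.orderEmbOfFin_mem (whites n c) hW j
    have hbm : ((blacks n c).orderEmbOfFin hB i) ∈ (nodes n)
        ∧ c ((blacks n c).orderEmbOfFin hB i) = true := Finset.mem_filter.1 hbm0
    have hwm : ((whites n c).orderEmbOfFin hW j) ∈ (nodes n)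
        ∧ c ((whites n c).orderEmbOfFin hW j) = false := Finset.mem_filter.1 hwm0
    rw [mem_nodes] at hbm hwm
    have ht := tau_eq c hbm.1.1 hwm.1.1 hbm.2 hwm.2
    rw [ht, hσ, ← pow_aux (hgt c ((blacks n c).orderEmbOfFin hB i))
      (hgt c ((whites n c).orderEmbOfFin hW j)) (i : ℕ) (j : ℕ)]
    ring
  · dsimp only
    have hT : ∀ (s : Finset ℕ) (hs : s.card = n),
        (∏ i : Fin n, (-1:ℤ)^(hgt c (s.orderEmbOfFin hs i) + (i:ℕ)))
          = (-1:ℤ)^((∑ x ∈ s, hgt c x) + ∑ i : Fin n, (i:ℕ)) := by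
      intro s hs
      rw [Finset.prod_pow_eq_pow_sum]
      congr 1
      rw [Finset.sum_add_distrib]
      congr 1
      exact sum_orderEmb s hs (hgt c)
    have hPd : (∏ j : Fin n, σ * (-1:ℤ)^(hgt c ((whites n c).orderEmbOfFin hW j) + (j:ℕ)))
        = σ^n * (-1:ℤ)^((∑ x ∈ whites n c, hgt c x) + ∑ i : Fin n, (i:ℕ)) := by
      rw [Finset.prod_mul_distrib, Finset.prod_const, Finset.card_univ, Fintype.card_fin,
        hT (whites n c) hW]
    rw [hT (blacks n c) hB, hPd]
    have hWn : whites n c = (nodes n).filter (fun i => ¬ c i = true) := by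
      unfold whites
      apply Finset.filter_congr
      intro m _
      cases c m <;> simp
    have hBW : (∑ x ∈ blacks n c, hgt c x) + (∑ x ∈ whites n c, hgt c x)
        = ∑ x ∈ nodes n, hgt c x := by
      rw [hWn]
      exact Finset.sum_filter_add_sum_filter_not (nodes n) _ _
    have hcomb : (-1:ℤ)^((∑ x ∈ blacks n c, hgt c x) + ∑ i : Fin n, (i:ℕ))
          * (-1:ℤ)^((∑ x ∈ whites n c, hgt c x) + ∑ i : Fin n, (i:ℕ))
        = (-1:ℤ)^(∑ x ∈ nodes n, hgt c x) := by
      rw [← pow_add]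
      apply neg_one_pow_congr
      rw [← hBW]
      push_cast
      linear_combination (∑ x : Fin n, ((x : ℕ) : ZMod 2)) * ztwo
    have hkey := key_sign n c hB' hW'
    cases hc1 : c 1
    · have hσv : σ = -1 := by rw [hσ, hc1]; simp
      rw [if_neg (by simp), hσv]
      calc (-1:ℤ)^((∑ x ∈ blacks n c, hgt c x) + ∑ i : Fin n, (i:ℕ))
            * ((-1)^n * (-1:ℤ)^((∑ x ∈ whites n c, hgt c x) + ∑ i : Fin n, (i:ℕ)))
          = (-1:ℤ)^n * ((-1:ℤ)^((∑ x ∈ blacks n c, hgt c x) + ∑ i : Fin n, (i:ℕ))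
            * (-1:ℤ)^((∑ x ∈ whites n c, hgt c x) + ∑ i : Fin n, (i:ℕ))) := by ring
        _ = (-1:ℤ)^n * (-1:ℤ)^(∑ x ∈ nodes n, hgt c x) := by rw [hcomb]
        _ = (-1:ℤ)^n * (signCons n c * (-1:ℤ)^(∑ m ∈ couples n c, m / 2)) := by rw [hkey]
        _ = (-1:ℤ)^n * signCons n c * (-1:ℤ)^(∑ m ∈ couples n c, m / 2) := by ring
    · have hσv : σ = 1 := by rw [hσ, hc1]; simp
      rw [if_pos rfl, hσv, one_pow, one_mul, hcomb, hkey]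


end DD
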